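/- arXiv:1205.4260 — 3 statements merged into one kernel-verified Lean document; each statement's English description precedes it below -/
import Mathlib

section
/- Fix ŷ ∈ ℂⁿ with ‖ŷ‖ = 1, let stab(ŷ) := {ξ ∈ 𝔨 : ξŷ = 0}, let P : 𝔨 → 𝔨 be the orthogonal projection onto the orthogonal complement of stab(ŷ) in 𝔨, and let Q := id − P. Then there exist an open neighbourhood U of ŷ in ℂⁿ and constants c, c′, c″ > 0 (depending only on ŷ and U) such that for every ξ ∈ 𝔨 and every x ∈ ℂⁿ ∖ {0} with x/‖x‖ ∈ U: (i) ‖ξx‖ ≥ c·‖x‖·‖Pξ‖, (ii) ‖ξx‖ ≥ c′·‖(Pξ)x‖, and (iii) ‖ξx‖ ≥ c″·(‖(Pξ)x‖ + ‖(Qξ)x‖). -/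
open scoped Matrix InnerProductSpace

noncomputable section

/-- Matrix-vector multiplication, viewed as a map on Euclidean space
(the fundamental vector field of a linear action). -/
def mulVecE {n : ℕ} (ξ : Matrix (Fin n) (Fin n) ℂ) (x : EuclideanSpace ℂ (Fin n)) :
    EuclideanSpace ℂ (Fin n) :=
  (WithLp.equiv 2 (Fin n → ℂ)).symm (ξ.mulVec (WithLp.equiv 2 (Fin n → ℂ) x))

/-- The real Frobenius inner product `⟪ξ,η⟫ = Re (tr (ξᴴ η))` on complex matrices. -/
def innK {n : ℕ} (ξ η : Matrix (Fin n) (Fin n) ℂ) : ℝ :=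
  (Matrix.trace (ξᴴ * η)).re

/-- The Frobenius norm induced by `innK`. -/
def normK {n : ℕ} (ξ : Matrix (Fin n) (Fin n) ℂ) : ℝ :=
  Real.sqrt (innK ξ ξ)

attribute [local instance] Matrix.normedAddCommGroup Matrix.normedSpace

@[reducible] def matTop {n : ℕ} : TopologicalSpace (Matrix (Fin n) (Fin n) ℂ) :=
  (Matrix.normedAddCommGroup : NormedAddCommGroup (Matrix (Fin n) (Fin n) ℂ)).toUniformSpace.toTopologicalSpace

attribute [local instance] matTop

variable {n : ℕ}

lemma mulVecE_eq (ξ : Matrix (Fin n) (Fin n) ℂ) (x : EuclideanSpace ℂ (Fin n)) :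
    mulVecE ξ x = Matrix.toEuclideanLin ξ x := rfl

lemma mulVecE_add (A B : Matrix (Fin n) (Fin n) ℂ) (x : EuclideanSpace ℂ (Fin n)) :
    mulVecE (A + B) x = mulVecE A x + mulVecE B x := by
  simp [mulVecE_eq, map_add]

lemma mulVecE_neg (A : Matrix (Fin n) (Fin n) ℂ) (x : EuclideanSpace ℂ (Fin n)) :
    mulVecE (-A) x = -mulVecE A x := by
  simp [mulVecE_eq, map_neg]

lemma mulVecE_mul (A B : Matrix (Fin n) (Fin n) ℂ) (x : EuclideanSpace ℂ (Fin n)) :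
    mulVecE A (mulVecE B x) = mulVecE (A * B) x := by
  simp [mulVecE, Matrix.mulVec_mulVec]

lemma mulVecE_subx (A : Matrix (Fin n) (Fin n) ℂ) (u v : EuclideanSpace ℂ (Fin n)) :
    mulVecE A (u - v) = mulVecE A u - mulVecE A v := by
  simp [mulVecE_eq, map_sub]

lemma rsmul_eq (r : ℝ) (A : Matrix (Fin n) (Fin n) ℂ) : r • A = (r : ℂ) • A := by
  ext i j; simp [Complex.real_smul]

lemma rsmulE_eq (r : ℝ) (v : EuclideanSpace ℂ (Fin n)) : r • v = (r : ℂ) • v := by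
  ext i; simp [Complex.real_smul]

lemma mulVecE_rsmul (r : ℝ) (A : Matrix (Fin n) (Fin n) ℂ) (x : EuclideanSpace ℂ (Fin n)) :
    mulVecE (r • A) x = r • mulVecE A x := by
  rw [rsmul_eq, mulVecE_eq, map_smul, LinearMap.smul_apply, ← mulVecE_eq]
  ext i
  simp [Complex.real_smul]

lemma mulVecE_rsmulx (r : ℝ) (A : Matrix (Fin n) (Fin n) ℂ) (x : EuclideanSpace ℂ (Fin n)) :
    mulVecE A (r • x) = r • mulVecE A x := by
  rw [rsmulE_eq, mulVecE_eq, map_smul, ← mulVecE_eq, rsmulE_eq]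

lemma innK_self (A : Matrix (Fin n) (Fin n) ℂ) :
    innK A A = ∑ i, ∑ j, ‖A i j‖ ^ 2 := by
  simp [innK, Matrix.trace, Matrix.mul_apply, Matrix.conjTranspose_apply,
    Matrix.diag, Complex.re_sum]
  rw [Finset.sum_comm]
  congr 1; ext i; congr 1; ext j
  rw [Complex.sq_norm, Complex.normSq_apply]

lemma eq_zero_of_innK_self (A : Matrix (Fin n) (Fin n) ℂ) (h : innK A A = 0) : A = 0 := by
  rw [innK_self] at h
  ext i j
  have h1 : ∀ i ∈ (Finset.univ : Finset (Fin n)), (0:ℝ) ≤ ∑ j, ‖A i j‖ ^ 2 := by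
    intro i _; positivity
  have := (Finset.sum_eq_zero_iff_of_nonneg h1).mp h i (Finset.mem_univ i)
  have h2 : ∀ j ∈ (Finset.univ : Finset (Fin n)), (0:ℝ) ≤ ‖A i j‖ ^ 2 := by
    intro j _; positivity
  have := (Finset.sum_eq_zero_iff_of_nonneg h2).mp this j (Finset.mem_univ j)
  have : ‖A i j‖ = 0 := by nlinarith [norm_nonneg (A i j)]
  simpa using this

lemma normK_nonneg (A : Matrix (Fin n) (Fin n) ℂ) : 0 ≤ normK A := Real.sqrt_nonneg _

lemma normK_le (A : Matrix (Fin n) (Fin n) ℂ) : normK A ≤ n * ‖A‖ := by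
  rw [normK, innK_self]
  have h : ∑ i, ∑ j, ‖A i j‖ ^ 2 ≤ (n * ‖A‖) ^ 2 := by
    calc ∑ i, ∑ j, ‖A i j‖ ^ 2 ≤ ∑ _i : Fin n, ∑ _j : Fin n, ‖A‖ ^ 2 := by
          apply Finset.sum_le_sum; intro i _; apply Finset.sum_le_sum; intro j _
          have := Matrix.norm_entry_le_entrywise_sup_norm A (i := i) (j := j)
          nlinarith [norm_nonneg (A i j)]
      _ = n * n * ‖A‖ ^ 2 := by simp [Finset.sum_const]; ring
      _ = (n * ‖A‖) ^ 2 := by ring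
  calc Real.sqrt (∑ i, ∑ j, ‖A i j‖ ^ 2) ≤ Real.sqrt ((n * ‖A‖) ^ 2) := Real.sqrt_le_sqrt h
    _ = n * ‖A‖ := Real.sqrt_sq (by positivity)

lemma innK_add_left (A B C : Matrix (Fin n) (Fin n) ℂ) :
    innK (A + B) C = innK A C + innK B C := by
  simp [innK, Matrix.conjTranspose_add, Matrix.add_mul]

lemma innK_rsmul_left (r : ℝ) (A C : Matrix (Fin n) (Fin n) ℂ) :
    innK (r • A) C = r * innK A C := by
  rw [rsmul_eq]
  simp [innK, Matrix.conjTranspose_smul, Matrix.smul_mul, Complex.mul_re]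

open Matrix in
lemma keyA (s w : Matrix (Fin n) (Fin n) ℂ) (hs : sᴴ = -s) (hw : wᴴ = -w)
    (hc : w * s = s * w) (x : EuclideanSpace ℂ (Fin n)) :
    ‖mulVecE w ((Submodule.orthogonalProjection (LinearMap.ker (Matrix.toEuclideanLin s)) x :
      EuclideanSpace ℂ (Fin n)))‖ ≤ ‖mulVecE (w + s) x‖ := by
  set K := LinearMap.ker (Matrix.toEuclideanLin s) with hK
  set x₀ : EuclideanSpace ℂ (Fin n) := (Submodule.orthogonalProjection K x : EuclideanSpace ℂ (Fin n))
  have hx₀K : x₀ ∈ K := SetLike.coe_mem _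
  set x₁ : EuclideanSpace ℂ (Fin n) := x - x₀
  have hx₁ : x₁ ∈ Kᗮ := Submodule.sub_starProjection_mem_orthogonal x
  have hsx₀ : mulVecE s x₀ = 0 := by
    have := hx₀K; rwa [LinearMap.mem_ker, ← mulVecE_eq] at this
  have hwK : ∀ z ∈ K, mulVecE w z ∈ K := by
    intro z hz
    rw [LinearMap.mem_ker, ← mulVecE_eq] at hz ⊢
    rw [mulVecE_mul, ← hc, ← mulVecE_mul, hz]
    simp [mulVecE]
  have hdecomp : mulVecE (w + s) x = mulVecE w x₀ + mulVecE (w + s) x₁ := by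
    have : x = x₀ + x₁ := by simp [x₁]
    rw [this, mulVecE_eq, map_add, ← mulVecE_eq, ← mulVecE_eq, mulVecE_add, hsx₀]
    abel
  have horth : ⟪mulVecE w x₀, mulVecE (w + s) x₁⟫_ℂ = 0 := by
    have hmem : mulVecE (w + s) x₁ ∈ Kᗮ := by
      rw [Submodule.mem_orthogonal]
      intro z hz
      have hadj : ⟪z, mulVecE (w + s) x₁⟫_ℂ = ⟪mulVecE (w + s)ᴴ z, x₁⟫_ℂ := by
        rw [mulVecE_eq, mulVecE_eq, Matrix.toEuclideanLin_conjTranspose_eq_adjoint,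
          LinearMap.adjoint_inner_left]
      rw [hadj]
      have h1 : (w + s)ᴴ = -(w+s) := by rw [Matrix.conjTranspose_add, hs, hw]; abel
      rw [h1]
      have hsz : mulVecE s z = 0 := by
        have := hz; rwa [hK, LinearMap.mem_ker, ← mulVecE_eq] at this
      have h3 : mulVecE (-(w+s)) z = -(mulVecE w z) := by
        rw [mulVecE_neg, mulVecE_add, hsz, add_zero]
      rw [h3, inner_neg_left,
        Submodule.inner_right_of_mem_orthogonal (hwK z hz) hx₁, neg_zero]
    exact Submodule.inner_right_of_mem_orthogonal (hwK _ hx₀K) hmem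
  have hpyth := norm_add_sq_eq_norm_sq_add_norm_sq_of_inner_eq_zero _ _ horth
  rw [hdecomp]
  nlinarith [norm_nonneg (mulVecE (w+s) x₁), norm_nonneg (mulVecE w x₀),
    norm_nonneg (mulVecE w x₀ + mulVecE (w+s) x₁)]

set_option maxHeartbeats 1000000

lemma exists_bound : ∃ M : ℝ, 0 < M ∧ ∀ (A : Matrix (Fin n) (Fin n) ℂ)
    (x : EuclideanSpace ℂ (Fin n)), ‖mulVecE A x‖ ≤ M * ‖A‖ * ‖x‖ := by
  let Φ : Matrix (Fin n) (Fin n) ℂ →ₗ[ℝ]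
      (EuclideanSpace ℂ (Fin n) →L[ℝ] EuclideanSpace ℂ (Fin n)) :=
    { toFun := fun A => LinearMap.toContinuousLinearMap
        ((Matrix.toEuclideanLin A).restrictScalars ℝ)
      map_add' := by intro A B; ext x; simp [map_add]
      map_smul' := by
        intro r A; ext x
        simp only [LinearMap.coe_toContinuousLinearMap', LinearMap.coe_restrictScalars,
          RingHom.id_apply, ContinuousLinearMap.coe_smul', Pi.smul_apply]
        rw [← mulVecE_eq, ← mulVecE_eq, mulVecE_rsmul] }
  let Φc := LinearMap.toContinuousLinearMap Φ
  refine ⟨‖Φc‖ + 1, by positivity, fun A x => ?_⟩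
  have h1 : mulVecE A x = Φc A x := rfl
  rw [h1]
  calc ‖Φc A x‖ ≤ ‖Φc A‖ * ‖x‖ := (Φc A).le_opNorm x
    _ ≤ (‖Φc‖ * ‖A‖) * ‖x‖ := by
        have := Φc.le_opNorm A
        have := norm_nonneg x
        nlinarith
    _ ≤ (‖Φc‖ + 1) * ‖A‖ * ‖x‖ := by
        have := norm_nonneg x; have := norm_nonneg A; have := norm_nonneg Φc
        nlinarith

lemma exists_antilip (Wsub : Submodule ℝ (Matrix (Fin n) (Fin n) ℂ))
    (yh : EuclideanSpace ℂ (Fin n))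
    (hinj : ∀ w ∈ Wsub, mulVecE w yh = 0 → w = 0) :
    ∃ a : ℝ, 0 < a ∧ ∀ w ∈ Wsub, a * ‖w‖ ≤ ‖mulVecE w yh‖ := by
  let T : Wsub →ₗ[ℝ] EuclideanSpace ℂ (Fin n) :=
    { toFun := fun w => mulVecE (w : Matrix (Fin n) (Fin n) ℂ) yh
      map_add' := by
        intro u v
        simp only [Submodule.coe_add, mulVecE_eq, map_add, LinearMap.add_apply]
      map_smul' := by
        intro r u
        simp only [SetLike.val_smul, RingHom.id_apply]
        rw [mulVecE_rsmul] }
  have hTinj : Function.Injective T := by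
    rw [← LinearMap.ker_eq_bot, LinearMap.ker_eq_bot']
    intro w hw
    have : (w : Matrix (Fin n) (Fin n) ℂ) = 0 := hinj w w.2 hw
    exact Subtype.ext this
  let e := LinearEquiv.ofInjective T hTinj
  let einvC := LinearMap.toContinuousLinearMap (e.symm : LinearMap.range T →ₗ[ℝ] Wsub)
  refine ⟨(‖einvC‖ + 1)⁻¹, inv_pos.mpr (by linarith [einvC.opNorm_nonneg]), fun w hw => ?_⟩
  set wS : Wsub := ⟨w, hw⟩
  have h1 : wS = einvC (e wS) := by
    simp only [einvC, LinearMap.coe_toContinuousLinearMap']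
    exact (e.symm_apply_apply wS).symm
  have h2 : ‖(e wS : EuclideanSpace ℂ (Fin n))‖ = ‖mulVecE w yh‖ := by
    have : (e wS : EuclideanSpace ℂ (Fin n)) = T wS := rfl
    rw [this]; rfl
  have h3 : ‖wS‖ ≤ ‖einvC‖ * ‖mulVecE w yh‖ := by
    calc ‖wS‖ = ‖einvC (e wS)‖ := by rw [← h1]
      _ ≤ ‖einvC‖ * ‖e wS‖ := einvC.le_opNorm _
      _ = ‖einvC‖ * ‖mulVecE w yh‖ := by rw [← h2]; rfl
  have h4 : ‖w‖ = ‖wS‖ := rfl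
  rw [h4]
  rw [inv_mul_le_iff₀ (by linarith [einvC.opNorm_nonneg])]
  have := einvC.opNorm_nonneg
  have := norm_nonneg (mulVecE w yh)
  nlinarith

/-- Key estimates near a point `yh` of the unit sphere:
`P` is the orthogonal projection of `𝔨` onto the orthogonal complement of `stab(yh)`
in `𝔨`, and `Q = id - P`. -/
theorem stmt7 (n : ℕ) (𝔨 : Submodule ℝ (Matrix (Fin n) (Fin n) ℂ))
    (hskew : ∀ ξ ∈ 𝔨, ξᴴ = -ξ)
    (habelian : ∀ ξ ∈ 𝔨, ∀ η ∈ 𝔨, ξ * η = η * ξ)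
    (yh : EuclideanSpace ℂ (Fin n)) (hyh : ‖yh‖ = 1)
    (P : Matrix (Fin n) (Fin n) ℂ → Matrix (Fin n) (Fin n) ℂ)
    (hPmem : ∀ ξ ∈ 𝔨, P ξ ∈ 𝔨)
    -- `P ξ` is orthogonal to `stab(yh) = {η ∈ 𝔨 : η yh = 0}` ...
    (hPperp : ∀ ξ ∈ 𝔨, ∀ η ∈ 𝔨, mulVecE η yh = 0 → innK (P ξ) η = 0)
    -- ... and `Q ξ = ξ - P ξ` lies in `stab(yh)`
    (hQstab : ∀ ξ ∈ 𝔨, mulVecE (ξ - P ξ) yh = 0) :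
    ∃ U : Set (EuclideanSpace ℂ (Fin n)), IsOpen U ∧ yh ∈ U ∧
      ∃ c > (0:ℝ), ∃ c' > (0:ℝ), ∃ c'' > (0:ℝ),
        ∀ ξ ∈ 𝔨, ∀ x : EuclideanSpace ℂ (Fin n), x ≠ 0 → ‖x‖⁻¹ • x ∈ U →
          ‖mulVecE ξ x‖ ≥ c * ‖x‖ * normK (P ξ) ∧
          ‖mulVecE ξ x‖ ≥ c' * ‖mulVecE (P ξ) x‖ ∧
          ‖mulVecE ξ x‖ ≥ c'' * (‖mulVecE (P ξ) x‖ + ‖mulVecE (ξ - P ξ) x‖) := by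
  classical
  obtain ⟨M, hM, hMb⟩ := exists_bound (n := n)
  set Wsub : Submodule ℝ (Matrix (Fin n) (Fin n) ℂ) :=
    { carrier := {η | η ∈ 𝔨 ∧ ∀ ζ ∈ 𝔨, mulVecE ζ yh = 0 → innK η ζ = 0}
      add_mem' := by
        rintro a b ⟨ha1, ha2⟩ ⟨hb1, hb2⟩
        exact ⟨𝔨.add_mem ha1 hb1, fun ζ hζ h0 => by
          rw [innK_add_left, ha2 ζ hζ h0, hb2 ζ hζ h0, add_zero]⟩
      zero_mem' := ⟨𝔨.zero_mem, fun ζ hζ h0 => by simp [innK]⟩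
      smul_mem' := by
        rintro r a ⟨ha1, ha2⟩
        exact ⟨𝔨.smul_mem r ha1, fun ζ hζ h0 => by
          rw [innK_rsmul_left, ha2 ζ hζ h0, mul_zero]⟩ } with hWsubdef
  have hinj : ∀ w ∈ Wsub, mulVecE w yh = 0 → w = 0 := by
    intro w hw h0
    exact eq_zero_of_innK_self w (hw.2 w hw.1 h0)
  obtain ⟨a, ha, haw⟩ := exists_antilip Wsub yh hinj
  set ε := a / (2 * M) with hεdef
  have hεpos : 0 < ε := by positivity
  have hMε : M * ε = a / 2 := by
    rw [hεdef]; field_simp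
  refine ⟨Metric.ball yh ε, Metric.isOpen_ball, Metric.mem_ball_self hεpos, ?_⟩
  refine ⟨a / (2 * (n + 1)), by positivity, a / (2 * M), by positivity,
    (2 / (a / (2 * M)) + 1)⁻¹, by positivity, ?_⟩
  intro ξ hξ x hx0 hxU
  set w := P ξ with hwdef
  set s := ξ - P ξ with hsdef
  have hwk : w ∈ 𝔨 := hPmem ξ hξ
  have hsk : s ∈ 𝔨 := 𝔨.sub_mem hξ hwk
  have hsyh : mulVecE s yh = 0 := hQstab ξ hξ
  have hcomm : w * s = s * w := habelian w hwk s hsk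
  have hwW : w ∈ Wsub := ⟨hwk, fun ζ hζ h0 => hPperp ξ hξ ζ hζ h0⟩
  have hξws : mulVecE ξ x = mulVecE (w + s) x := by
    have : ξ = w + s := by rw [hwdef, hsdef]; abel
    rw [← this]
  set K := LinearMap.ker (Matrix.toEuclideanLin s) with hKdef
  have hyhK : yh ∈ K := by rw [LinearMap.mem_ker, ← mulVecE_eq]; exact hsyh
  set px : EuclideanSpace ℂ (Fin n) := (Submodule.orthogonalProjection K x : EuclideanSpace ℂ (Fin n))
    with hpxdef
  have key1 : ‖mulVecE w px‖ ≤ ‖mulVecE ξ x‖ := by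
    rw [hξws]
    exact keyA s w (hskew s hsk) (hskew w hwk) hcomm x
  set z : EuclideanSpace ℂ (Fin n) := ‖x‖ • yh with hzdef
  have hzK : z ∈ K := K.smul_of_tower_mem _ hyhK
  have hpz : (Submodule.orthogonalProjection K z : EuclideanSpace ℂ (Fin n)) = z :=
    Submodule.starProjection_eq_self_iff.mpr hzK
  have hxnorm : (0:ℝ) < ‖x‖ := norm_pos_iff.mpr hx0
  have hxz : ‖x - z‖ ≤ ‖x‖ * ε := by
    have h2 : x - z = ‖x‖ • (‖x‖⁻¹ • x - yh) := by
      rw [smul_sub, smul_inv_smul₀ (ne_of_gt hxnorm), hzdef]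
    rw [h2, norm_smul]
    have hdist : ‖‖x‖⁻¹ • x - yh‖ < ε := by
      have := hxU
      rw [Metric.mem_ball, dist_eq_norm] at this
      exact this
    have : ‖(‖x‖ : ℝ)‖ = ‖x‖ := by simp
    rw [this]
    nlinarith
  have hproj : ‖px - z‖ ≤ ‖x‖ * ε := by
    have h1 : px - z = ((Submodule.orthogonalProjection K (x - z) : K) : EuclideanSpace ℂ (Fin n)) := by
      rw [map_sub, Submodule.coe_sub, hpz]
    rw [h1]
    calc ‖((Submodule.orthogonalProjection K (x - z) : K) : EuclideanSpace ℂ (Fin n))‖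
        = ‖Submodule.orthogonalProjection K (x - z)‖ := rfl
      _ ≤ ‖Submodule.orthogonalProjection K‖ * ‖x - z‖ := (Submodule.orthogonalProjection K).le_opNorm _
      _ ≤ 1 * ‖x - z‖ := by
          have := Submodule.orthogonalProjectionOnto_norm_le K
          have := norm_nonneg (x - z)
          nlinarith
      _ ≤ ‖x‖ * ε := by linarith [hxz]
  have hwz : ‖x‖ * (a * ‖w‖) ≤ ‖mulVecE w z‖ := by
    have h1 : mulVecE w z = ‖x‖ • mulVecE w yh := by
      rw [hzdef, mulVecE_rsmulx]
    rw [h1, norm_smul]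
    have h2 : ‖(‖x‖ : ℝ)‖ = ‖x‖ := by simp
    rw [h2]
    exact mul_le_mul_of_nonneg_left (haw w hwW) (norm_nonneg x)
  have hdiff : ‖mulVecE w z - mulVecE w px‖ ≤ M * ‖w‖ * (‖x‖ * ε) := by
    rw [← mulVecE_subx]
    calc ‖mulVecE w (z - px)‖ ≤ M * ‖w‖ * ‖z - px‖ := hMb w (z - px)
      _ ≤ M * ‖w‖ * (‖x‖ * ε) := by
          rw [norm_sub_rev]
          exact mul_le_mul_of_nonneg_left hproj (by positivity)
  have hcentral : a / 2 * (‖x‖ * ‖w‖) ≤ ‖mulVecE ξ x‖ := by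
    have htri := norm_sub_norm_le (mulVecE w z) (mulVecE w px)
    have h5 : a / 2 * (‖x‖ * ‖w‖) ≤ ‖mulVecE w px‖ := by
      have hx2 : M * ‖w‖ * (‖x‖ * ε) = a / 2 * (‖x‖ * ‖w‖) := by
        rw [← hMε]; ring
      nlinarith
    linarith [key1]
  have hwnn : (0:ℝ) ≤ ‖w‖ := norm_nonneg w
  refine ⟨?_, ?_, ?_⟩
  · -- (i)
    have hnormK : normK w ≤ (n + 1) * ‖w‖ := by
      have := normK_le w
      nlinarith
    have hc : a / (2 * (n + 1)) * ((n:ℝ) + 1) = a / 2 := by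
      field_simp
    have h6 : a / (2 * (n + 1)) * ‖x‖ * normK w ≤ a / 2 * (‖x‖ * ‖w‖) := by
      have h7 : a / (2 * (n + 1)) * ‖x‖ * normK w
          ≤ a / (2 * (n + 1)) * ‖x‖ * (((n:ℝ) + 1) * ‖w‖) := by
        have : (0:ℝ) ≤ a / (2 * (n + 1)) * ‖x‖ := by positivity
        nlinarith
      calc a / (2 * (n + 1)) * ‖x‖ * normK w
          ≤ a / (2 * (n + 1)) * ‖x‖ * (((n:ℝ) + 1) * ‖w‖) := h7
        _ = (a / (2 * (n + 1)) * ((n:ℝ) + 1)) * (‖x‖ * ‖w‖) := by ring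
        _ = a / 2 * (‖x‖ * ‖w‖) := by rw [hc]
    exact le_trans h6 hcentral
  · -- (ii)
    have h1 : a / (2 * M) * ‖mulVecE w x‖ ≤ a / 2 * (‖x‖ * ‖w‖) := by
      have h2 : ‖mulVecE w x‖ ≤ M * ‖w‖ * ‖x‖ := hMb w x
      have h3 : (0:ℝ) < a / (2 * M) := by positivity
      have h4 : a / (2 * M) * (M * ‖w‖ * ‖x‖) = a / 2 * (‖x‖ * ‖w‖) := by
        field_simp
      nlinarith
    exact le_trans h1 hcentral
  · -- (iii)
    set c' : ℝ := a / (2 * M) with hc'def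
    have hc' : (0:ℝ) < c' := by positivity
    have hii : c' * ‖mulVecE w x‖ ≤ ‖mulVecE ξ x‖ := by
      have h1 : c' * ‖mulVecE w x‖ ≤ a / 2 * (‖x‖ * ‖w‖) := by
        have h2 : ‖mulVecE w x‖ ≤ M * ‖w‖ * ‖x‖ := hMb w x
        have h4 : c' * (M * ‖w‖ * ‖x‖) = a / 2 * (‖x‖ * ‖w‖) := by
          rw [hc'def]; field_simp
        nlinarith
      exact le_trans h1 hcentral
    have hsx : ‖mulVecE s x‖ ≤ ‖mulVecE ξ x‖ + ‖mulVecE w x‖ := by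
      have h1 : mulVecE s x = mulVecE ξ x - mulVecE w x := by
        rw [hξws, mulVecE_add]; abel
      rw [h1]
      exact norm_sub_le _ _
    have hcc : (2 / c' + 1)⁻¹ * (2 / c' + 1) = 1 := by
      apply inv_mul_cancel₀; positivity
    have hccpos : (0:ℝ) < (2 / c' + 1)⁻¹ := by positivity
    have hfin : ‖mulVecE w x‖ + ‖mulVecE s x‖ ≤ (2 / c' + 1) * ‖mulVecE ξ x‖ := by
      have h1 : ‖mulVecE w x‖ ≤ (1 / c') * ‖mulVecE ξ x‖ := by
        rw [div_mul_eq_mul_div, le_div_iff₀ hc']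
        nlinarith
      have h2 : (2 / c' + 1) * ‖mulVecE ξ x‖
          = 2 * ((1 / c') * ‖mulVecE ξ x‖) + ‖mulVecE ξ x‖ := by ring
      linarith
    calc (2 / c' + 1)⁻¹ * (‖mulVecE w x‖ + ‖mulVecE s x‖)
        ≤ (2 / c' + 1)⁻¹ * ((2 / c' + 1) * ‖mulVecE ξ x‖) := by
          nlinarith
      _ = ‖mulVecE ξ x‖ := by rw [← mul_assoc, hcc, one_mul]
end
end

section
/- For every μ_c ∈ 𝔨, setting f_c := ‖μ_c‖², there exist constants c > 0 and ε > 0 (depending on μ_c) such that ‖x‖²·f(x) ≥ c·|f(x) − f_c|^{3/2} for all x ∈ ℂⁿ with ‖μ(x) − μ_c‖ < ε. -/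
open scoped Matrix

noncomputable section

def toE {n : ℕ} (ξ : Matrix (Fin n) (Fin n) ℂ) : EuclideanSpace ℂ (Fin n × Fin n) :=
  (WithLp.equiv 2 ((Fin n × Fin n) → ℂ)).symm (fun p => ξ p.1 p.2)

lemma innK_eq {n : ℕ} (ξ η : Matrix (Fin n) (Fin n) ℂ) :
    innK ξ η = (inner ℂ (toE ξ) (toE η) : ℂ).re := by
  simp only [innK, toE, Matrix.trace, Matrix.diag, Matrix.mul_apply,
    Matrix.conjTranspose_apply, PiLp.inner_apply, RCLike.inner_apply]
  rw [Fintype.sum_prod_type]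
  rw [Finset.sum_comm]
  simp only [WithLp.equiv_symm_apply, WithLp.ofLp_toLp, starRingEnd_apply, mul_comm]

lemma toE_add {n : ℕ} (a b : Matrix (Fin n) (Fin n) ℂ) : toE (a + b) = toE a + toE b := rfl
lemma toE_sub {n : ℕ} (a b : Matrix (Fin n) (Fin n) ℂ) : toE (a - b) = toE a - toE b := rfl

lemma normK_eq {n : ℕ} (ξ : Matrix (Fin n) (Fin n) ℂ) : normK ξ = ‖toE ξ‖ := by
  rw [normK, innK_eq, @norm_eq_sqrt_re_inner ℂ]
  rfl

lemma normK_sq {n : ℕ} (ξ : Matrix (Fin n) (Fin n) ℂ) :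
    normK ξ ^ 2 = ∑ i : Fin n, ∑ j : Fin n, ‖ξ i j‖ ^ 2 := by
  rw [normK_eq, EuclideanSpace.norm_eq, Real.sq_sqrt (by positivity),
    Fintype.sum_prod_type]
  rfl

lemma norm_mulVecE_le {n : ℕ} (ξ : Matrix (Fin n) (Fin n) ℂ) (x : EuclideanSpace ℂ (Fin n)) :
    ‖mulVecE ξ x‖ ≤ normK ξ * ‖x‖ := by
  have hsq : ‖mulVecE ξ x‖ ^ 2 ≤ (normK ξ * ‖x‖) ^ 2 := by
    rw [mul_pow, normK_sq, Finset.sum_mul]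
    rw [show (‖mulVecE ξ x‖ : ℝ) ^ 2 = ∑ i, ‖mulVecE ξ x i‖ ^ 2 from by
      rw [EuclideanSpace.norm_eq, Real.sq_sqrt]; positivity]
    apply Finset.sum_le_sum
    intro i _
    set a : EuclideanSpace ℂ (Fin n) :=
      (WithLp.equiv 2 (Fin n → ℂ)).symm (fun j => starRingEnd ℂ (ξ i j)) with ha
    have hin : (inner ℂ a x : ℂ) = mulVecE ξ x i := by
      simp [ha, mulVecE, PiLp.inner_apply, RCLike.inner_apply, Matrix.mulVec, dotProduct, mul_comm]
    have h1 : ‖mulVecE ξ x i‖ ≤ ‖a‖ * ‖x‖ := by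
      rw [← hin]; exact norm_inner_le_norm a x
    have h2 : ‖a‖ ^ 2 = ∑ j, ‖ξ i j‖ ^ 2 := by
      rw [EuclideanSpace.norm_eq, Real.sq_sqrt (by positivity)]
      simp [ha]
    calc ‖mulVecE ξ x i‖ ^ 2 ≤ (‖a‖ * ‖x‖) ^ 2 := by
          apply pow_le_pow_left₀ (norm_nonneg _) h1
      _ = (∑ j, ‖ξ i j‖ ^ 2) * ‖x‖ ^ 2 := by rw [mul_pow, h2]
  have h := Real.sqrt_le_sqrt hsq
  rwa [Real.sqrt_sq (norm_nonneg _), Real.sqrt_sq (show (0:ℝ) ≤ normK ξ * ‖x‖ from mul_nonneg (Real.sqrt_nonneg _) (norm_nonneg _))] at h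

lemma rpow32 {a : ℝ} (ha : 0 ≤ a) : a ^ ((3:ℝ)/2) = a * Real.sqrt a := by
  rcases eq_or_lt_of_le ha with h | h
  · rw [← h, Real.zero_rpow (by norm_num), Real.sqrt_zero, mul_zero]
  · rw [show (3:ℝ)/2 = 1 + 1/2 by norm_num, Real.rpow_add h, Real.rpow_one,
      ← Real.sqrt_eq_rpow]

set_option maxHeartbeats 1600000 in
lemma key (m r : ℝ) (hm : 0 ≤ m) (hr : 0 ≤ r) :
    ∃ c > (0:ℝ), ∃ ε > (0:ℝ), ∀ s t d : ℝ, 0 ≤ s → 0 ≤ t → 0 ≤ d →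
      d < ε → |t - m| ≤ d → r - d ≤ s/2 → d ≤ s/2 + r →
      s * t^2 ≥ c * |t^2 - m^2| ^ ((3:ℝ)/2) := by
  rcases eq_or_lt_of_le hm with hm0 | hm0
  · rcases eq_or_lt_of_le hr with hr0 | hr0
    · refine ⟨2, by norm_num, 1, by norm_num, ?_⟩
      intro s t d hs ht hd hdε htm hrs hdr
      have ht2 : t ≤ d := by rw [← hm0] at htm; simpa [abs_of_nonneg ht] using htm
      have hds : d ≤ s/2 := by rw [← hr0] at hdr; linarith
      have habs : |t^2 - m^2| = t^2 := by rw [← hm0]; simp [abs_of_nonneg (sq_nonneg t)]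
      rw [habs, rpow32 (sq_nonneg t), Real.sqrt_sq ht]
      nlinarith [mul_le_mul_of_nonneg_right (show 2*t ≤ s by linarith) (sq_nonneg t)]
    · refine ⟨1, one_pos, r/2, by linarith, ?_⟩
      intro s t d hs ht hd hdε htm hrs hdr
      have ht2 : t ≤ d := by rw [← hm0] at htm; simpa [abs_of_nonneg ht] using htm
      have hsr : r ≤ s := by linarith
      have habs : |t^2 - m^2| = t^2 := by rw [← hm0]; simp [abs_of_nonneg (sq_nonneg t)]
      rw [habs, rpow32 (sq_nonneg t), Real.sqrt_sq ht]
      nlinarith [mul_le_mul_of_nonneg_right (show t ≤ s by linarith) (sq_nonneg t)]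
  · set ε := if r = 0 then m/1024 else min (m/1024) (r/2) with hε
    have hεpos : 0 < ε := by
      rw [hε]; split_ifs with h
      · linarith
      · exact lt_min (by linarith) (by rcases (lt_of_le_of_ne hr (Ne.symm h)) with h'; linarith)
    have hεm : ε ≤ m/1024 := by
      rw [hε]; split_ifs
      · exact le_refl _
      · exact min_le_left _ _
    refine ⟨1, one_pos, ε, hεpos, ?_⟩
    intro s t d hs ht hd hdε htm hrs hdr
    have hdm : d < m/1024 := lt_of_lt_of_le hdε hεm
    have hds : d ≤ 3/2 * s := by
      by_cases hrz : r = 0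
      · rw [hrz] at hdr; linarith
      · have hrpos : 0 < r := lt_of_le_of_ne hr (Ne.symm hrz)
        have hdr2 : d < r/2 := lt_of_lt_of_le hdε (by rw [hε]; simp [hrz])
        linarith
    obtain ⟨htl, htu⟩ := abs_le.mp htm
    have ht1 : m/2 ≤ t := by linarith
    have ht2 : t ≤ 2*m := by linarith
    have hΔ : |t^2 - m^2| ≤ d * (3*m) := by
      have he : t^2 - m^2 = (t - m) * (t + m) := by ring
      rw [he, abs_mul, abs_of_nonneg (show (0:ℝ) ≤ t + m by linarith)]
      exact mul_le_mul htm (by linarith) (by linarith) hd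
    have hΔ2 : |t^2 - m^2| ≤ 3 * m^2 / 1024 := le_trans hΔ (by nlinarith)
    have hsqrt : Real.sqrt |t^2 - m^2| ≤ Real.sqrt 3 * m / 32 := by
      refine le_trans (Real.sqrt_le_sqrt hΔ2) ?_
      have h3 : Real.sqrt 3 ^ 2 = 3 := Real.sq_sqrt (by norm_num)
      have he : 3 * m^2 / 1024 = (Real.sqrt 3 * m / 32)^2 := by
        rw [div_pow, mul_pow, h3]; ring
      rw [he, Real.sqrt_sq (by positivity)]
    rw [rpow32 (abs_nonneg _), one_mul]
    have hΔ3 : |t^2 - m^2| ≤ 9/2 * (s * m) := le_trans hΔ (by nlinarith)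
    have hfin : |t^2 - m^2| * Real.sqrt |t^2 - m^2|
        ≤ (9/2 * (s * m)) * (Real.sqrt 3 * m / 32) :=
      mul_le_mul hΔ3 hsqrt (Real.sqrt_nonneg _) (by nlinarith)
    have h93 : Real.sqrt 3 ≤ 16/9 := by
      nlinarith [Real.sq_sqrt (show (0:ℝ) ≤ 3 by norm_num), Real.sqrt_nonneg 3]
    have hsm : 0 ≤ s * m^2 := mul_nonneg hs (sq_nonneg m)
    have hlast : (9/2 * (s * m)) * (Real.sqrt 3 * m / 32) ≤ 1/4 * (s * m^2) := by
      have h1 : Real.sqrt 3 * (s * m^2) ≤ 16/9 * (s * m^2) :=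
        mul_le_mul_of_nonneg_right h93 hsm
      linarith [h1]
    have hmt : m/2 * (m/2) ≤ t * t := mul_le_mul ht1 ht1 (by linarith) ht
    have h4 : 1/4 * (s * m^2) ≤ s * t^2 := by
      have h5 : m^2/4 ≤ t^2 := by nlinarith [hmt]
      have h6 := mul_le_mul_of_nonneg_left h5 hs
      linarith [h6]
    linarith [hfin, hlast, h4]

lemma re_inner_self {E' : Type*} [NormedAddCommGroup E'] [InnerProductSpace ℂ E'] (v : E') :
    (inner ℂ v v : ℂ).re = ‖v‖^2 := by
  rw [show (inner ℂ v v : ℂ).re = RCLike.re (inner ℂ v v) from rfl]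
  exact inner_self_eq_norm_sq v

/-- The key estimate `‖x‖²·f(x) ≥ c·|f(x) − f_c|^{3/2}` near any level
`μ_c` of the moment map of a linear action of an abelian group. -/
theorem stmt9 (n : ℕ) (𝔨 : Submodule ℝ (Matrix (Fin n) (Fin n) ℂ))
    (hskew : ∀ ξ ∈ 𝔨, ξᴴ = -ξ)
    (habelian : ∀ ξ ∈ 𝔨, ∀ η ∈ 𝔨, ξ * η = η * ξ)
    (α : Matrix (Fin n) (Fin n) ℂ) (hα : α ∈ 𝔨)
    (μ : EuclideanSpace ℂ (Fin n) → Matrix (Fin n) (Fin n) ℂ)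
    (hμmem : ∀ x, μ x ∈ 𝔨)
    (hμ : ∀ x, ∀ ξ ∈ 𝔨,
      innK (μ x) ξ
        = (1/2) * (inner ℂ (Complex.I • mulVecE ξ x) x : ℂ).re - innK α ξ)
    (f : EuclideanSpace ℂ (Fin n) → ℝ)
    (hf : ∀ x, f x = innK (μ x) (μ x))
    (μc : Matrix (Fin n) (Fin n) ℂ) (hμc : μc ∈ 𝔨)
    (fc : ℝ) (hfc : fc = innK μc μc) :
    ∃ c > (0:ℝ), ∃ ε > (0:ℝ), ∀ x : EuclideanSpace ℂ (Fin n),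
      normK (μ x - μc) < ε →
        ‖x‖ ^ 2 * f x ≥ c * |f x - fc| ^ ((3:ℝ)/2) := by
  obtain ⟨c, hc, ε, hεpos, hkey⟩ :=
    key ‖toE μc‖ ‖toE μc + toE α‖ (norm_nonneg _) (norm_nonneg _)
  refine ⟨c, hc, ε, hεpos, ?_⟩
  intro x hx
  set A := toE (μ x) with hA
  set B := toE μc with hB
  set C := toE α with hC
  have hbound : ‖A + C‖ ≤ ‖x‖^2 / 2 := by
    set ξ := μ x + α with hξdef
    have hξ : ξ ∈ 𝔨 := Submodule.add_mem _ (hμmem x) hα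
    have h1 := hμ x ξ hξ
    have hTE : toE ξ = A + C := toE_add _ _
    have h2 : innK (μ x) ξ + innK α ξ = ‖A + C‖^2 := by
      rw [innK_eq, innK_eq, hTE, ← Complex.add_re, ← inner_add_left]
      exact re_inner_self (A + C)
    have h3 : ‖A + C‖^2 = (1/2) * (inner ℂ (Complex.I • mulVecE ξ x) x : ℂ).re := by
      rw [← h2, h1]; ring
    have h4 : (inner ℂ (Complex.I • mulVecE ξ x) x : ℂ).re ≤ ‖mulVecE ξ x‖ * ‖x‖ := by
      calc (inner ℂ (Complex.I • mulVecE ξ x) x : ℂ).re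
          ≤ ‖(inner ℂ (Complex.I • mulVecE ξ x) x : ℂ)‖ := Complex.re_le_norm _
        _ ≤ ‖Complex.I • mulVecE ξ x‖ * ‖x‖ := norm_inner_le_norm _ _
        _ = ‖mulVecE ξ x‖ * ‖x‖ := by rw [norm_smul]; simp
    have h5 : ‖mulVecE ξ x‖ ≤ normK ξ * ‖x‖ := norm_mulVecE_le ξ x
    have h6 : normK ξ = ‖A + C‖ := by rw [normK_eq, hTE]
    have h7 : ‖A + C‖^2 ≤ 1/2 * (‖A + C‖ * ‖x‖ * ‖x‖) := by
      rw [h6] at h5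
      nlinarith [h4, mul_le_mul_of_nonneg_right h5 (norm_nonneg x)]
    rcases eq_or_lt_of_le (norm_nonneg (A + C)) with hz | hz
    · rw [← hz]; positivity
    · nlinarith [h7]
  have hd : normK (μ x - μc) = ‖A - B‖ := by rw [normK_eq, toE_sub]
  have hfx : f x = ‖A‖^2 := by rw [hf, innK_eq]; exact re_inner_self A
  have hfcB : fc = ‖B‖^2 := by rw [hfc, innK_eq]; exact re_inner_self B
  have hr1 : ‖B + C‖ - ‖A - B‖ ≤ ‖x‖^2 / 2 := by
    have he : B + C = (A + C) - (A - B) := by abel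
    have := he ▸ norm_sub_le (A + C) (A - B)
    linarith [hbound]
  have hr2 : ‖A - B‖ ≤ ‖x‖^2 / 2 + ‖B + C‖ := by
    have he : A - B = (A + C) - (B + C) := by abel
    have := he ▸ norm_sub_le (A + C) (B + C)
    linarith [hbound]
  have hmain := hkey (‖x‖^2) ‖A‖ ‖A - B‖ (sq_nonneg _) (norm_nonneg _) (norm_nonneg _)
    (hd ▸ hx) (abs_norm_sub_norm_le A B) hr1 hr2
  rw [hfx, hfcB]
  exact hmain
end
end

section
/- Let y ∈ ℂⁿ ∖ {0} be such that 𝔨₁ := {ξ ∈ 𝔨 : ξy = 0} is a nonzero proper subspace of 𝔨, let 𝔨₂ := 𝔨₁^⊥ be its orthogonal complement in 𝔨, let P₁ and P₂ be the orthogonal projections of 𝔨 onto 𝔨₁ and 𝔨₂, and set f_i := ‖P_i ∘ μ‖² for i = 1, 2. Then there exist an open neighbourhood U of y/‖y‖ in ℂⁿ and a constant c > 0 such that ‖∇f(x)‖ ≥ c·(‖∇f₁(x)‖ + ‖∇f₂(x)‖) for all x ∈ ℂⁿ ∖ {0} with x/‖x‖ ∈ U. -/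
open scoped Matrix

noncomputable section

/- ### Auxiliary development -/

abbrev stmtE (n : ℕ) := EuclideanSpace ℂ (Fin n)

variable {n : ℕ}

lemma stmt_innK_self_eq (ξ : Matrix (Fin n) (Fin n) ℂ) :
    innK ξ ξ = ∑ i, ∑ j, Complex.normSq (ξ j i) := by
  simp [innK, Matrix.trace, Matrix.diag, Matrix.mul_apply, Complex.normSq_apply,
    Matrix.conjTranspose_apply, Complex.mul_re]

lemma stmt_innK_symm (ξ η : Matrix (Fin n) (Fin n) ℂ) : innK ξ η = innK η ξ := by
  have : (ηᴴ * ξ).trace = star ((ξᴴ * η).trace) := by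
    rw [← Matrix.trace_conjTranspose, Matrix.conjTranspose_mul,
      Matrix.conjTranspose_conjTranspose]
  simp only [innK, this, Complex.star_def, Complex.conj_re]

/-- The real inner-product-space core on complex matrices given by `innK`. -/
def stmtMatCore (n : ℕ) : InnerProductSpace.Core ℝ (Matrix (Fin n) (Fin n) ℂ) where
  inner ξ η := innK ξ η
  conj_inner_symm ξ η := by simpa using stmt_innK_symm η ξ
  re_inner_nonneg ξ := by
    show (0:ℝ) ≤ RCLike.re (innK ξ ξ)
    rw [RCLike.re_to_real, stmt_innK_self_eq]
    exact Finset.sum_nonneg fun a _ => Finset.sum_nonneg fun b _ => Complex.normSq_nonneg _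
  definite ξ h := by
    have h' : innK ξ ξ = 0 := h
    rw [stmt_innK_self_eq] at h'
    ext i j
    have h1 := (Finset.sum_eq_zero_iff_of_nonneg
      (fun a _ => Finset.sum_nonneg (fun b _ => Complex.normSq_nonneg _))).mp h'
    have h2 := (Finset.sum_eq_zero_iff_of_nonneg
      (fun b _ => Complex.normSq_nonneg _)).mp (h1 j (Finset.mem_univ j))
    simpa [Complex.normSq_eq_zero] using h2 i (Finset.mem_univ i)
  add_left ξ η ζ := by
    show innK (ξ + η) ζ = innK ξ ζ + innK η ζ
    simp [innK, Matrix.conjTranspose_add, Matrix.add_mul]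
  smul_left ξ η r := by
    show innK (r • ξ) η = _
    simp only [innK, Matrix.conjTranspose_smul, Matrix.smul_mul, Matrix.trace_smul]
    simp [Complex.real_smul, Complex.mul_re]

/-- Norm on complex matrices induced by `innK` (local use only). -/
@[reducible]
def stmtMatNorm (n : ℕ) : NormedAddCommGroup (Matrix (Fin n) (Fin n) ℂ) :=
  @InnerProductSpace.Core.toNormedAddCommGroup ℝ _ _ _ _ (stmtMatCore n)

attribute [local instance] stmtMatNorm

/-- Inner product space structure on complex matrices induced by `innK` (local use only). -/
@[reducible]
def stmtMatIPS (n : ℕ) :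
    @InnerProductSpace ℝ (Matrix (Fin n) (Fin n) ℂ) _
      (stmtMatNorm n).toSeminormedAddCommGroup :=
  InnerProductSpace.ofCore (stmtMatCore n).toCore

attribute [local instance] stmtMatIPS

lemma stmt_innK_eq_inner (ξ η : Matrix (Fin n) (Fin n) ℂ) :
    innK ξ η = (inner ℝ ξ η) := rfl

lemma stmt_norm_sq_innK (ξ : Matrix (Fin n) (Fin n) ℂ) : ‖ξ‖ ^ 2 = innK ξ ξ := by
  rw [← real_inner_self_eq_norm_sq]; rfl

lemma stmt_inner_re (a b : stmtE n) : (inner ℝ a b) = (inner ℂ a b).re := by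
  simp [inner, Complex.mul_re, map_sum]

lemma stmt_mulVecE_add (ξ η : Matrix (Fin n) (Fin n) ℂ) (x : stmtE n) :
    mulVecE (ξ + η) x = mulVecE ξ x + mulVecE η x := by
  simp [mulVecE, Matrix.add_mulVec]

lemma stmt_mulVecE_smul (c : ℂ) (ξ : Matrix (Fin n) (Fin n) ℂ) (x : stmtE n) :
    mulVecE (c • ξ) x = c • mulVecE ξ x := by
  simp [mulVecE, Matrix.smul_mulVec]

lemma stmt_mulVecE_rsmul (c : ℝ) (ξ : Matrix (Fin n) (Fin n) ℂ) (x : stmtE n) :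
    mulVecE (c • ξ) x = c • mulVecE ξ x := by
  simp [mulVecE, Matrix.smul_mulVec]

lemma stmt_mulVecE_neg (ξ : Matrix (Fin n) (Fin n) ℂ) (x : stmtE n) :
    mulVecE (-ξ) x = -mulVecE ξ x := by
  have := stmt_mulVecE_smul (-1) ξ x
  simpa using this

lemma stmt_mulVecE_smul_vec (c : ℂ) (ξ : Matrix (Fin n) (Fin n) ℂ) (x : stmtE n) :
    mulVecE ξ (c • x) = c • mulVecE ξ x := by
  simp [mulVecE, Matrix.mulVec_smul]

lemma stmt_mulVecE_rsmul_vec (c : ℝ) (ξ : Matrix (Fin n) (Fin n) ℂ) (x : stmtE n) :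
    mulVecE ξ (c • x) = c • mulVecE ξ x := by
  have h : c • x = (c : ℂ) • x := by
    ext i; simp [Complex.real_smul]
  have h2 : c • mulVecE ξ x = (c : ℂ) • mulVecE ξ x := by
    ext i; simp [Complex.real_smul]
  rw [h, h2, stmt_mulVecE_smul_vec]

lemma stmt_mulVecE_add_vec (ξ : Matrix (Fin n) (Fin n) ℂ) (x z : stmtE n) :
    mulVecE ξ (x + z) = mulVecE ξ x + mulVecE ξ z := by
  simp [mulVecE, Matrix.mulVec_add]

lemma stmt_mulVecE_sub_vec (ξ : Matrix (Fin n) (Fin n) ℂ) (x z : stmtE n) :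
    mulVecE ξ (x - z) = mulVecE ξ x - mulVecE ξ z := by
  have := stmt_mulVecE_add_vec ξ (x - z) z
  simp only [sub_add_cancel] at this
  rw [this]; abel

lemma stmt_mulVecE_mul (ξ η : Matrix (Fin n) (Fin n) ℂ) (x : stmtE n) :
    mulVecE (ξ * η) x = mulVecE ξ (mulVecE η x) := by
  simp [mulVecE, Matrix.mulVec_mulVec]

lemma stmt_inner_mulVecE (ξ : Matrix (Fin n) (Fin n) ℂ) (a b : stmtE n) :
    (inner ℂ (mulVecE ξ a) b) = inner ℂ a (mulVecE ξᴴ b) := by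
  simp only [mulVecE]
  simp [inner, Matrix.mulVec, dotProduct, Finset.mul_sum, Finset.sum_mul,
    Matrix.conjTranspose_apply, mul_comm, mul_assoc, mul_left_comm]
  rw [Finset.sum_comm]
/-- `z ↦ I • (ξ z)` as a real-linear map on Euclidean space. -/
def stmtMvA (ξ : Matrix (Fin n) (Fin n) ℂ) : stmtE n →ₗ[ℝ] stmtE n where
  toFun z := Complex.I • mulVecE ξ z
  map_add' a b := by
    show Complex.I • mulVecE ξ (a + b) = Complex.I • mulVecE ξ a + Complex.I • mulVecE ξ b
    rw [stmt_mulVecE_add_vec, smul_add]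
  map_smul' r a := by
    show Complex.I • mulVecE ξ (r • a) = r • (Complex.I • mulVecE ξ a)
    rw [stmt_mulVecE_rsmul_vec, smul_comm]

/-- `z ↦ I • (ξ z)` as a real continuous linear map. -/
def stmtMvACLM (ξ : Matrix (Fin n) (Fin n) ℂ) : stmtE n →L[ℝ] stmtE n :=
  (stmtMvA ξ).toContinuousLinearMap

lemma stmtMvACLM_apply (ξ : Matrix (Fin n) (Fin n) ℂ) (z : stmtE n) :
    stmtMvACLM ξ z = Complex.I • mulVecE ξ z := rfl

lemma stmtMvACLM_symm (ξ : Matrix (Fin n) (Fin n) ℂ) (hξ : ξᴴ = -ξ) (a b : stmtE n) :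
    (inner ℝ (stmtMvACLM ξ a) b) = inner ℝ a (stmtMvACLM ξ b) := by
  rw [stmt_inner_re, stmt_inner_re, stmtMvACLM_apply, stmtMvACLM_apply]
  rw [inner_smul_left, inner_smul_right, stmt_inner_mulVecE, hξ, stmt_mulVecE_neg,
    inner_neg_right]
  simp [Complex.ext_iff]

lemma stmt_hasGradientAt_half_inner (A : stmtE n →L[ℝ] stmtE n)
    (hsym : ∀ a b : stmtE n, (inner ℝ (A a) b) = inner ℝ a (A b)) (c : ℝ) (x : stmtE n) :
    HasGradientAt (fun z => (1/2) * (inner ℝ (A z) z) - c) (A x) x := by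
  have hB : IsBoundedBilinearMap ℝ (fun p : stmtE n × stmtE n => (inner ℝ p.1 p.2)) :=
    isBoundedBilinearMap_inner (𝕜 := ℝ)
  have hφ : HasFDerivAt (fun z : stmtE n => ((A z, z) : stmtE n × stmtE n))
      (A.prod (ContinuousLinearMap.id ℝ (stmtE n))) x :=
    (HasFDerivAt.prodMk A.hasFDerivAt (hasFDerivAt_id x))
  have h1 : HasFDerivAt
      ((fun p : stmtE n × stmtE n => (inner ℝ p.1 p.2)) ∘ fun z : stmtE n => (A z, z))
      ((hB.deriv (A x, x)).comp (A.prod (ContinuousLinearMap.id ℝ (stmtE n)))) x :=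
    HasFDerivAt.comp x (hB.hasFDerivAt (A x, x)) hφ
  have h1' : HasFDerivAt (fun z : stmtE n => (inner ℝ (A z) z))
      ((hB.deriv (A x, x)).comp (A.prod (ContinuousLinearMap.id ℝ (stmtE n)))) x := h1
  have h2 := (h1'.const_mul (1/2:ℝ)).sub_const c
  rw [hasGradientAt_iff_hasFDerivAt]
  refine h2.congr_fderiv (Eq.symm ?_)
  ext v
  simp only [ContinuousLinearMap.coe_comp', Function.comp_apply, ContinuousLinearMap.prod_apply,
    ContinuousLinearMap.coe_id', id_eq, IsBoundedBilinearMap.deriv_apply,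
    ContinuousLinearMap.smul_apply, InnerProductSpace.toDual_apply_apply]
  rw [hsym v x, real_inner_comm v (A x), smul_eq_mul]
  ring

lemma stmt_hasGradientAt_add {f g : stmtE n → ℝ} {a b x : stmtE n}
    (hf : HasGradientAt f a x) (hg : HasGradientAt g b x) :
    HasGradientAt (fun z => f z + g z) (a + b) x := by
  rw [hasGradientAt_iff_hasFDerivAt] at hf hg ⊢
  rw [map_add]
  exact hf.add hg

lemma stmt_hasGradientAt_sum_sq {m : ℕ} (g : Fin m → stmtE n → ℝ) (G : Fin m → stmtE n)
    (x : stmtE n) (h : ∀ j, HasGradientAt (g j) (G j) x) :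
    HasGradientAt (fun z => ∑ j, (g j z)^2) (∑ j, (2 * g j x) • G j) x := by
  rw [hasGradientAt_iff_hasFDerivAt]
  have hj : ∀ j : Fin m, HasFDerivAt (fun z => (g j z)^2)
      ((2 * g j x) • (InnerProductSpace.toDual ℝ (stmtE n) (G j))) x := by
    intro j
    have hd := (h j).hasFDerivAt
    have h2 := hd.mul hd
    have hfun : (fun z => (g j z)^2) = fun z => g j z * g j z := by funext z; ring
    rw [hfun, two_mul, add_smul]
    exact h2
  have := HasFDerivAt.fun_sum (fun j (_ : j ∈ Finset.univ) => hj j)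
  rw [map_sum]
  simp_rw [map_smul]
  exact this

/-- Expansion of an element of a submodule in the standard orthonormal basis of the
submodule, with an orthogonal error term. -/
lemma stmt_expand {F : Type*} [NormedAddCommGroup F] [InnerProductSpace ℝ F]
    [FiniteDimensional ℝ F] (S : Submodule ℝ F) (v w : F) (hv : v ∈ S) (hw : w ∈ Sᗮ) :
    v = ∑ j, (inner ℝ ((stdOrthonormalBasis ℝ S j : F)) (v + w)) •
      (stdOrthonormalBasis ℝ S j : F) := by
  have key : ∀ j, (inner ℝ ((stdOrthonormalBasis ℝ S j : F)) (v + w))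
      = inner ℝ ((stdOrthonormalBasis ℝ S j : F)) v := by
    intro j
    rw [inner_add_right]
    have : (inner ℝ ((stdOrthonormalBasis ℝ S j : F)) w) = 0 :=
      (Submodule.mem_orthogonal S w).mp hw _ (stdOrthonormalBasis ℝ S j).2
    rw [this, add_zero]
  simp_rw [key]
  have h := (stdOrthonormalBasis ℝ S).sum_repr ⟨v, hv⟩
  have h2 := congrArg (Submodule.subtype S) h
  simp only [map_sum, map_smul, Submodule.subtype_apply] at h2
  have hcoef : ∀ j, (stdOrthonormalBasis ℝ S).repr ⟨v, hv⟩ j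
      = (inner ℝ ((stdOrthonormalBasis ℝ S j : F)) v) := by
    intro j
    rw [(stdOrthonormalBasis ℝ S).repr_apply_apply]
    exact Submodule.coe_inner S _ _
  simp_rw [hcoef] at h2
  exact h2.symm
lemma stmt_mulVecE_sum {ι : Type*} (s : Finset ι) (F : ι → Matrix (Fin n) (Fin n) ℂ)
    (x : stmtE n) : mulVecE (∑ i ∈ s, F i) x = ∑ i ∈ s, mulVecE (F i) x := by
  classical
  induction s using Finset.cons_induction with
  | empty => simp [mulVecE]
  | cons i s hi ih => rw [Finset.sum_cons, Finset.sum_cons, stmt_mulVecE_add, ih]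

lemma stmt_norm_sq_E (v : stmtE n) : ‖v‖^2 = ∑ i, ‖v i‖^2 := by
  rw [EuclideanSpace.norm_eq, Real.sq_sqrt]
  exact Finset.sum_nonneg fun i _ => sq_nonneg _

/-- Operator bound: `‖ξ w‖ ≤ ‖ξ‖ ‖w‖` for the Frobenius norm on matrices. -/
lemma stmt_opBound (ξ : Matrix (Fin n) (Fin n) ℂ) (w : stmtE n) :
    ‖mulVecE ξ w‖ ≤ ‖ξ‖ * ‖w‖ := by
  set a : Fin n → stmtE n :=
    fun i => (WithLp.equiv 2 (Fin n → ℂ)).symm (fun j => starRingEnd ℂ (ξ i j)) with ha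
  have hav : ∀ i, (mulVecE ξ w) i = (inner ℂ (a i) w) := by
    intro i
    simp [mulVecE, ha, inner, Matrix.mulVec, dotProduct]
    exact Finset.sum_congr rfl fun _ _ => mul_comm _ _
  have hrow : ∀ i, ‖a i‖^2 = ∑ j, ‖ξ i j‖^2 := by
    intro i
    rw [stmt_norm_sq_E]
    congr 1; ext j
    simp [ha]
  have hfro : ‖ξ‖^2 = ∑ i, ∑ j, ‖ξ i j‖^2 := by
    rw [stmt_norm_sq_innK, stmt_innK_self_eq]
    rw [Finset.sum_comm]
    congr 1; ext i; congr 1; ext j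
    rw [← Complex.sq_norm]
  have hsq : ‖mulVecE ξ w‖^2 ≤ (‖ξ‖ * ‖w‖)^2 := by
    rw [stmt_norm_sq_E]
    have hterm : ∀ i, ‖(mulVecE ξ w) i‖^2 ≤ ‖a i‖^2 * ‖w‖^2 := by
      intro i
      rw [hav i]
      have := norm_inner_le_norm (𝕜 := ℂ) (a i) w
      have h2 : ‖(inner ℂ (a i) w)‖^2 ≤ (‖a i‖ * ‖w‖)^2 := by
        apply pow_le_pow_left₀ (norm_nonneg _) this
      rw [mul_pow] at h2
      exact h2
    calc ∑ i, ‖(mulVecE ξ w) i‖^2 ≤ ∑ i, ‖a i‖^2 * ‖w‖^2 :=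
          Finset.sum_le_sum fun i _ => hterm i
      _ = (∑ i, ‖a i‖^2) * ‖w‖^2 := by rw [Finset.sum_mul]
      _ = (‖ξ‖ * ‖w‖)^2 := by
          rw [mul_pow, hfro]
          congr 2
          ext i
          rw [hrow]
  calc ‖mulVecE ξ w‖ = Real.sqrt (‖mulVecE ξ w‖^2) := (Real.sqrt_sq (norm_nonneg _)).symm
    _ ≤ Real.sqrt ((‖ξ‖ * ‖w‖)^2) := Real.sqrt_le_sqrt hsq
    _ = ‖ξ‖ * ‖w‖ := Real.sqrt_sq (mul_nonneg (norm_nonneg _) (norm_nonneg _))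
set_option maxHeartbeats 2000000 in
/-- The inductive step: near a direction `y` with nonzero proper
infinitesimal stabilizer `𝔨₁`, splitting `𝔨 = 𝔨₁ ⊕ 𝔨₂` gives
`‖∇f‖ ≥ c (‖∇f₁‖ + ‖∇f₂‖)`. -/
theorem stmt12 (n : ℕ) (𝔨 : Submodule ℝ (Matrix (Fin n) (Fin n) ℂ))
    (hskew : ∀ ξ ∈ 𝔨, ξᴴ = -ξ)
    (habelian : ∀ ξ ∈ 𝔨, ∀ η ∈ 𝔨, ξ * η = η * ξ)
    (α : Matrix (Fin n) (Fin n) ℂ) (hα : α ∈ 𝔨)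
    (μ : EuclideanSpace ℂ (Fin n) → Matrix (Fin n) (Fin n) ℂ)
    (hμmem : ∀ x, μ x ∈ 𝔨)
    (hμ : ∀ x, ∀ ξ ∈ 𝔨,
      innK (μ x) ξ
        = (1/2) * (inner ℂ (Complex.I • mulVecE ξ x) x : ℂ).re - innK α ξ)
    (f : EuclideanSpace ℂ (Fin n) → ℝ)
    (hf : ∀ x, f x = innK (μ x) (μ x))
    (y : EuclideanSpace ℂ (Fin n)) (hy : y ≠ 0)
    -- `𝔨₁ = {ξ ∈ 𝔨 : ξ y = 0}` is nonzero and proper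
    (hstab_ne : ∃ ξ ∈ 𝔨, ξ ≠ 0 ∧ mulVecE ξ y = 0)
    (hstab_proper : ∃ ξ ∈ 𝔨, mulVecE ξ y ≠ 0)
    -- `P₁, P₂` are the orthogonal projections of `𝔨` onto `𝔨₁` and onto `𝔨₂ = 𝔨₁^⊥`
    (P₁ P₂ : Matrix (Fin n) (Fin n) ℂ → Matrix (Fin n) (Fin n) ℂ)
    (hP₁mem : ∀ ξ ∈ 𝔨, P₁ ξ ∈ 𝔨)
    (hP₁stab : ∀ ξ ∈ 𝔨, mulVecE (P₁ ξ) y = 0)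
    (hP₂mem : ∀ ξ ∈ 𝔨, P₂ ξ ∈ 𝔨)
    (hP₂perp : ∀ ξ ∈ 𝔨, ∀ η ∈ 𝔨, mulVecE η y = 0 → innK (P₂ ξ) η = 0)
    (hP₁P₂ : ∀ ξ ∈ 𝔨, P₁ ξ + P₂ ξ = ξ)
    -- the norm-squares of the two projected moment maps
    (f₁ f₂ : EuclideanSpace ℂ (Fin n) → ℝ)
    (hf₁ : ∀ x, f₁ x = innK (P₁ (μ x)) (P₁ (μ x)))
    (hf₂ : ∀ x, f₂ x = innK (P₂ (μ x)) (P₂ (μ x))) :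
    ∃ U : Set (EuclideanSpace ℂ (Fin n)), IsOpen U ∧ ‖y‖⁻¹ • y ∈ U ∧
      ∃ c > (0:ℝ), ∀ x : EuclideanSpace ℂ (Fin n), x ≠ 0 → ‖x‖⁻¹ • x ∈ U →
        ‖gradient f x‖ ≥ c * (‖gradient f₁ x‖ + ‖gradient f₂ x‖) := by
  classical
  have hny : ‖y‖ ≠ 0 := norm_ne_zero_iff.mpr hy
  set yh : stmtE n := ‖y‖⁻¹ • y with hyhdef
  have hyyh : y = ‖y‖ • yh := by
    rw [hyhdef, smul_inv_smul₀ hny]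
  have hstab_equiv : ∀ ξ : Matrix (Fin n) (Fin n) ℂ, mulVecE ξ y = 0 ↔ mulVecE ξ yh = 0 := by
    intro ξ
    constructor
    · intro h; rw [hyhdef, stmt_mulVecE_rsmul_vec, h, smul_zero]
    · intro h
      rw [hyyh, stmt_mulVecE_rsmul_vec, h, smul_zero]
  -- the stabilizer of `yh` inside `𝔨`, as the kernel of `L`
  set L : ↥𝔨 →ₗ[ℝ] stmtE n :=
    { toFun := fun ξ => mulVecE ξ.1 yh
      map_add' := fun ξ η => stmt_mulVecE_add ξ.1 η.1 yh
      map_smul' := fun r ξ => stmt_mulVecE_rsmul r ξ.1 yh } with hLdef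
  set k₁ : Submodule ℝ ↥𝔨 := LinearMap.ker L with hk₁def
  have hk₁mem : ∀ ξ : ↥𝔨, ξ ∈ k₁ ↔ mulVecE ξ.1 y = 0 := by
    intro ξ
    rw [hk₁def, LinearMap.mem_ker]
    exact (show L ξ = mulVecE ξ.1 yh from rfl) ▸ (hstab_equiv ξ.1).symm
  -- the antilipschitz constant on the orthogonal complement
  have hKcex : ∃ Kc : ℝ, 0 < Kc ∧
      ∀ v : ↥k₁ᗮ, ‖v‖ ≤ Kc * ‖mulVecE ((v : ↥𝔨) : Matrix (Fin n) (Fin n) ℂ) yh‖ := by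
    set L' : ↥(k₁ᗮ) →ₗ[ℝ] stmtE n := L.comp (k₁ᗮ).subtype with hL'def
    have hker : LinearMap.ker L' = ⊥ := by
      rw [Submodule.eq_bot_iff]
      rintro v hv
      have h1 : (v : ↥𝔨) ∈ k₁ := by
        rw [LinearMap.mem_ker] at hv
        exact LinearMap.mem_ker.mpr hv
      have h2 : (v : ↥𝔨) ∈ k₁ᗮ := v.2
      have h3 : (v : ↥𝔨) = 0 :=
        (Submodule.mem_bot ℝ).mp ((k₁.orthogonal_disjoint).le_bot ⟨h1, h2⟩)
      exact Subtype.ext h3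
    obtain ⟨K, hK, hanti'⟩ := L'.exists_antilipschitzWith hker
    refine ⟨K, by exact_mod_cast hK, fun v => ?_⟩
    have := hanti'.le_mul_dist v 0
    simp [dist_eq_norm] at this
    exact this
  obtain ⟨Kc, hKc, hanti⟩ := hKcex
  -- coefficient functions
  set gfun : Matrix (Fin n) (Fin n) ℂ → stmtE n → ℝ :=
    fun ζ x => (1/2) * (inner ℂ (Complex.I • mulVecE ζ x) x).re - innK α ζ with hgfun
  have hgval : ∀ (x) (ζ) (_ : ζ ∈ 𝔨), innK (μ x) ζ = gfun ζ x := fun x ζ hζ => hμ x ζ hζ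
  -- adapted orthonormal bases
  set b₁ := stdOrthonormalBasis ℝ ↥k₁ with hb₁def
  set b₂ := stdOrthonormalBasis ℝ ↥(k₁ᗮ) with hb₂def
  set u : Fin (Module.finrank ℝ ↥k₁) → Matrix (Fin n) (Fin n) ℂ :=
    fun j => ((b₁ j : ↥𝔨) : Matrix (Fin n) (Fin n) ℂ) with hudef
  set v : Fin (Module.finrank ℝ ↥(k₁ᗮ)) → Matrix (Fin n) (Fin n) ℂ :=
    fun j => ((b₂ j : ↥𝔨) : Matrix (Fin n) (Fin n) ℂ) with hvdef
  have humem : ∀ j, u j ∈ 𝔨 := fun j => ((b₁ j : ↥𝔨)).2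
  have hustab : ∀ j, mulVecE (u j) y = 0 := fun j => (hk₁mem _).mp (b₁ j).2
  have hvmem : ∀ j, v j ∈ 𝔨 := fun j => ((b₂ j : ↥𝔨)).2
  -- the two components of the moment map, and their basic properties
  have hm₁mem : ∀ x, P₁ (μ x) ∈ 𝔨 := fun x => hP₁mem _ (hμmem x)
  have hm₂mem : ∀ x, P₂ (μ x) ∈ 𝔨 := fun x => hP₂mem _ (hμmem x)
  have hm₁k₁ : ∀ x, (⟨P₁ (μ x), hm₁mem x⟩ : ↥𝔨) ∈ k₁ :=
    fun x => (hk₁mem _).mpr (hP₁stab _ (hμmem x))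
  have hm₂perp : ∀ x, (⟨P₂ (μ x), hm₂mem x⟩ : ↥𝔨) ∈ k₁ᗮ := by
    intro x
    rw [Submodule.mem_orthogonal]
    intro w hw
    have : innK (P₂ (μ x)) w.1 = 0 :=
      hP₂perp _ (hμmem x) _ w.2 ((hk₁mem w).mp hw)
    have h2 : innK w.1 (P₂ (μ x)) = 0 := by rw [stmt_innK_symm]; exact this
    exact h2
  have hm_sum : ∀ x, (⟨P₁ (μ x), hm₁mem x⟩ : ↥𝔨) + ⟨P₂ (μ x), hm₂mem x⟩
      = ⟨μ x, hμmem x⟩ := fun x => Subtype.ext (hP₁P₂ _ (hμmem x))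
  -- basis expansions of the two components
  have hcoef₁ : ∀ (x) (j), (inner ℝ ((b₁ j : ↥𝔨)) (⟨μ x, hμmem x⟩ : ↥𝔨)) = gfun (u j) x := by
    intro x j
    have h1 : (inner ℝ ((b₁ j : ↥𝔨)) (⟨μ x, hμmem x⟩ : ↥𝔨)) = innK (u j) (μ x) :=
      Submodule.coe_inner 𝔨 _ _
    rw [h1, stmt_innK_symm]
    exact hgval x _ (humem j)
  have hcoef₂ : ∀ (x) (j), (inner ℝ ((b₂ j : ↥𝔨)) (⟨μ x, hμmem x⟩ : ↥𝔨)) = gfun (v j) x := by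
    intro x j
    have h1 : (inner ℝ ((b₂ j : ↥𝔨)) (⟨μ x, hμmem x⟩ : ↥𝔨)) = innK (v j) (μ x) :=
      Submodule.coe_inner 𝔨 _ _
    rw [h1, stmt_innK_symm]
    exact hgval x _ (hvmem j)
  have hexp₁ : ∀ x, P₁ (μ x) = ∑ j, gfun (u j) x • u j := by
    intro x
    have h := stmt_expand k₁ (⟨P₁ (μ x), hm₁mem x⟩ : ↥𝔨) ⟨P₂ (μ x), hm₂mem x⟩
      (hm₁k₁ x) (hm₂perp x)
    rw [hm_sum x] at h
    simp only [← hb₁def, hcoef₁ x] at h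
    have h2 := congrArg (Subtype.val : ↥𝔨 → Matrix (Fin n) (Fin n) ℂ) h
    simpa [hcoef₁ x] using h2
  have hexp₂ : ∀ x, P₂ (μ x) = ∑ j, gfun (v j) x • v j := by
    intro x
    have h := stmt_expand (k₁ᗮ) (⟨P₂ (μ x), hm₂mem x⟩ : ↥𝔨) ⟨P₁ (μ x), hm₁mem x⟩
      (hm₂perp x) (Submodule.le_orthogonal_orthogonal k₁ (hm₁k₁ x))
    rw [add_comm, hm_sum x] at h
    simp only [← hb₂def, hcoef₂ x] at h
    have h2 := congrArg (Subtype.val : ↥𝔨 → Matrix (Fin n) (Fin n) ℂ) h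
    simpa [hcoef₂ x] using h2
  -- matrix-level coefficient identities
  have hperp₂₁ : ∀ x, innK (P₂ (μ x)) (P₁ (μ x)) = 0 :=
    fun x => hP₂perp _ (hμmem x) _ (hm₁mem x) (hP₁stab _ (hμmem x))
  have hcoefm₁ : ∀ (x) (j), (inner ℝ (u j) (P₁ (μ x))) = gfun (u j) x := by
    intro x j
    have hs : innK (u j) (μ x) = innK (u j) (P₁ (μ x)) + innK (u j) (P₂ (μ x)) := by
      conv_lhs => rw [← hP₁P₂ _ (hμmem x)]
      rw [stmt_innK_eq_inner, stmt_innK_eq_inner, stmt_innK_eq_inner, inner_add_right]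
    have hz : innK (u j) (P₂ (μ x)) = 0 := by
      rw [stmt_innK_symm]
      exact hP₂perp _ (hμmem x) _ (humem j) (hustab j)
    rw [← stmt_innK_eq_inner]
    have := hs.symm
    rw [hz, add_zero] at this
    rw [this, stmt_innK_symm]
    exact hgval x _ (humem j)
  have hcoefm₂ : ∀ (x) (j), (inner ℝ (v j) (P₂ (μ x))) = gfun (v j) x := by
    intro x j
    have hs : innK (v j) (μ x) = innK (v j) (P₁ (μ x)) + innK (v j) (P₂ (μ x)) := by
      conv_lhs => rw [← hP₁P₂ _ (hμmem x)]
      rw [stmt_innK_eq_inner, stmt_innK_eq_inner, stmt_innK_eq_inner, inner_add_right]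
    have hz : innK (v j) (P₁ (μ x)) = 0 := by
      have h1 : (inner ℝ ((b₂ j : ↥𝔨)) (⟨P₁ (μ x), hm₁mem x⟩ : ↥𝔨)) = 0 := by
        have := (Submodule.mem_orthogonal k₁ (b₂ j : ↥𝔨)).mp (b₂ j).2 _ (hm₁k₁ x)
        rw [real_inner_comm] at this
        exact this
      have h2 : (inner ℝ ((b₂ j : ↥𝔨)) (⟨P₁ (μ x), hm₁mem x⟩ : ↥𝔨))
          = innK (v j) (P₁ (μ x)) := Submodule.coe_inner 𝔨 _ _
      rw [← h2, h1]
    have := hs.symm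
    rw [hz, zero_add] at this
    rw [← stmt_innK_eq_inner, this, stmt_innK_symm]
    exact hgval x _ (hvmem j)
  -- the split of `f`, `f₁`, `f₂` into sums of squares
  have hf₁eq : f₁ = fun x => ∑ j, (gfun (u j) x)^2 := by
    funext x
    rw [hf₁ x, stmt_innK_eq_inner]
    rw [show (inner ℝ (P₁ (μ x)) (P₁ (μ x)))
        = (inner ℝ (∑ j, gfun (u j) x • u j) (P₁ (μ x))) from by rw [← hexp₁ x]]
    rw [sum_inner]
    refine Finset.sum_congr rfl fun j _ => ?_
    rw [real_inner_smul_left, hcoefm₁ x j, sq]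
  have hf₂eq : f₂ = fun x => ∑ j, (gfun (v j) x)^2 := by
    funext x
    rw [hf₂ x, stmt_innK_eq_inner]
    rw [show (inner ℝ (P₂ (μ x)) (P₂ (μ x)))
        = (inner ℝ (∑ j, gfun (v j) x • v j) (P₂ (μ x))) from by rw [← hexp₂ x]]
    rw [sum_inner]
    refine Finset.sum_congr rfl fun j _ => ?_
    rw [real_inner_smul_left, hcoefm₂ x j, sq]
  have hfeq : f = fun x => f₁ x + f₂ x := by
    funext x
    rw [hf x, hf₁ x, hf₂ x]
    have hzero : innK (P₁ (μ x)) (P₂ (μ x)) = 0 := by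
      rw [stmt_innK_symm]; exact hperp₂₁ x
    rw [stmt_innK_eq_inner, stmt_innK_eq_inner, stmt_innK_eq_inner]
    conv_lhs => rw [← hP₁P₂ _ (hμmem x)]
    rw [real_inner_add_add_self, ← stmt_innK_eq_inner (P₁ (μ x)) (P₂ (μ x)), hzero]
    ring
  -- gradient formulas
  have hgradgen : ∀ (ζ) (_ : ζ ∈ 𝔨) (x : stmtE n),
      HasGradientAt (gfun ζ) (Complex.I • mulVecE ζ x) x := by
    intro ζ hζ x
    have hA := stmt_hasGradientAt_half_inner (stmtMvACLM ζ)
      (stmtMvACLM_symm ζ (hskew ζ hζ)) (innK α ζ) x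
    have hfun : gfun ζ = fun z => (1/2) * (inner ℝ (stmtMvACLM ζ z) z) - innK α ζ := by
      funext z
      rw [hgfun]
      simp only
      rw [stmt_inner_re]
      rfl
    rw [hfun]
    exact hA
  have hgrad₁ : ∀ x, HasGradientAt f₁ ((2:ℝ) • (Complex.I • mulVecE (P₁ (μ x)) x)) x := by
    intro x
    rw [hf₁eq]
    have h := stmt_hasGradientAt_sum_sq (fun j => gfun (u j))
      (fun j => Complex.I • mulVecE (u j) x) x (fun j => hgradgen (u j) (humem j) x)
    have hmatch : ∑ j, (2 * gfun (u j) x) • (Complex.I • mulVecE (u j) x)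
        = (2:ℝ) • (Complex.I • mulVecE (P₁ (μ x)) x) := by
      rw [hexp₁ x, stmt_mulVecE_sum]
      rw [show ∑ j, mulVecE (gfun (u j) x • u j) x = ∑ j, gfun (u j) x • mulVecE (u j) x from
        Finset.sum_congr rfl fun j _ => stmt_mulVecE_rsmul _ _ _]
      rw [Finset.smul_sum, Finset.smul_sum]
      refine Finset.sum_congr rfl fun j _ => ?_
      rw [smul_comm Complex.I (gfun (u j) x) (mulVecE (u j) x), smul_smul]
    rw [← hmatch]
    exact h
  have hgrad₂ : ∀ x, HasGradientAt f₂ ((2:ℝ) • (Complex.I • mulVecE (P₂ (μ x)) x)) x := by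
    intro x
    rw [hf₂eq]
    have h := stmt_hasGradientAt_sum_sq (fun j => gfun (v j))
      (fun j => Complex.I • mulVecE (v j) x) x (fun j => hgradgen (v j) (hvmem j) x)
    have hmatch : ∑ j, (2 * gfun (v j) x) • (Complex.I • mulVecE (v j) x)
        = (2:ℝ) • (Complex.I • mulVecE (P₂ (μ x)) x) := by
      rw [hexp₂ x, stmt_mulVecE_sum]
      rw [show ∑ j, mulVecE (gfun (v j) x • v j) x = ∑ j, gfun (v j) x • mulVecE (v j) x from
        Finset.sum_congr rfl fun j _ => stmt_mulVecE_rsmul _ _ _]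
      rw [Finset.smul_sum, Finset.smul_sum]
      refine Finset.sum_congr rfl fun j _ => ?_
      rw [smul_comm Complex.I (gfun (v j) x) (mulVecE (v j) x), smul_smul]
    rw [← hmatch]
    exact h
  have hgradf : ∀ x, HasGradientAt f
      ((2:ℝ) • (Complex.I • mulVecE (P₁ (μ x)) x)
        + (2:ℝ) • (Complex.I • mulVecE (P₂ (μ x)) x)) x := by
    intro x
    rw [hfeq]
    exact stmt_hasGradientAt_add (hgrad₁ x) (hgrad₂ x)
  -- the neighbourhood and the constant
  set ε : ℝ := Kc⁻¹ / 8 with hεdef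
  have hε : 0 < ε := by positivity
  refine ⟨Metric.ball yh ε, Metric.isOpen_ball, Metric.mem_ball_self hε, 1/2, by norm_num, ?_⟩
  intro x hx hxU
  have hr : (0:ℝ) < ‖x‖ := norm_pos_iff.mpr hx
  have hxu : ‖‖x‖⁻¹ • x - yh‖ < ε := by
    rw [Metric.mem_ball, dist_eq_norm] at hxU
    exact hxU
  set z : stmtE n := x - ‖x‖ • yh with hzdef
  have hzeq : z = ‖x‖ • (‖x‖⁻¹ • x - yh) := by
    rw [hzdef, smul_sub, smul_inv_smul₀ (ne_of_gt hr)]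
  have hz : ‖z‖ ≤ ‖x‖ * ε := by
    rw [hzeq, norm_smul, Real.norm_of_nonneg (le_of_lt hr)]
    exact mul_le_mul_of_nonneg_left (le_of_lt hxu) (le_of_lt hr)
  have hxzy : x = z + ‖x‖ • yh := by rw [hzdef]; abel
  have hm₁yh : mulVecE (P₁ (μ x)) yh = 0 := (hstab_equiv _).mp (hP₁stab _ (hμmem x))
  set w₁ := mulVecE (P₁ (μ x)) x with hw₁def
  set w₂ := mulVecE (P₂ (μ x)) x with hw₂def
  have hw₁z : w₁ = mulVecE (P₁ (μ x)) z := by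
    calc w₁ = mulVecE (P₁ (μ x)) (z + ‖x‖ • yh) := by rw [← hxzy]
      _ = mulVecE (P₁ (μ x)) z := by
          rw [stmt_mulVecE_add_vec, stmt_mulVecE_rsmul_vec, hm₁yh, smul_zero, add_zero]
  have hmulzero : ∀ ζ : Matrix (Fin n) (Fin n) ℂ, mulVecE ζ (0 : stmtE n) = 0 := by
    intro ζ
    simp [mulVecE]
  have hIJ : P₁ (μ x) * P₂ (μ x) = P₂ (μ x) * P₁ (μ x) :=
    habelian _ (hm₁mem x) _ (hm₂mem x)
  have hcross0 : (inner ℂ (mulVecE (P₁ (μ x)) z) (mulVecE (P₂ (μ x)) (‖x‖ • yh))) = 0 := by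
    rw [stmt_inner_mulVecE, hskew _ (hm₁mem x), stmt_mulVecE_neg, ← stmt_mulVecE_mul, hIJ,
      stmt_mulVecE_mul, stmt_mulVecE_rsmul_vec, hm₁yh, smul_zero, hmulzero, neg_zero,
      inner_zero_right]
  have hw₂split : w₂ = mulVecE (P₂ (μ x)) z + mulVecE (P₂ (μ x)) (‖x‖ • yh) := by
    calc w₂ = mulVecE (P₂ (μ x)) (z + ‖x‖ • yh) := by rw [← hxzy]
      _ = _ := stmt_mulVecE_add_vec _ _ _
  have hcrosseq : (inner ℂ w₁ w₂) = inner ℂ (mulVecE (P₁ (μ x)) z) (mulVecE (P₂ (μ x)) z) := by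
    rw [hw₁z, hw₂split, inner_add_right, hcross0, add_zero]
  set N : ℝ := ‖P₂ (μ x)‖ with hNdef
  have hN : 0 ≤ N := norm_nonneg _
  have hcbound : |(inner ℝ w₁ w₂)| ≤ ‖w₁‖ * (N * (‖x‖ * ε)) := by
    rw [stmt_inner_re, hcrosseq]
    calc |(inner ℂ (mulVecE (P₁ (μ x)) z) (mulVecE (P₂ (μ x)) z)).re|
        ≤ ‖(inner ℂ (mulVecE (P₁ (μ x)) z) (mulVecE (P₂ (μ x)) z))‖ :=
          Complex.abs_re_le_norm _
      _ ≤ ‖mulVecE (P₁ (μ x)) z‖ * ‖mulVecE (P₂ (μ x)) z‖ := norm_inner_le_norm _ _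
      _ ≤ ‖w₁‖ * (N * (‖x‖ * ε)) := by
          rw [← hw₁z]
          refine mul_le_mul_of_nonneg_left ?_ (norm_nonneg _)
          calc ‖mulVecE (P₂ (μ x)) z‖ ≤ N * ‖z‖ := stmt_opBound _ _
            _ ≤ N * (‖x‖ * ε) := mul_le_mul_of_nonneg_left hz hN
  have hyNlow : N ≤ Kc * ‖mulVecE (P₂ (μ x)) yh‖ := by
    have := hanti ⟨⟨P₂ (μ x), hm₂mem x⟩, hm₂perp x⟩
    simpa using this
  have hw₂low : ‖x‖ * (Kc⁻¹ * N - N * ε) ≤ ‖w₂‖ := by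
    have hxuexp : w₂ = ‖x‖ • mulVecE (P₂ (μ x)) (‖x‖⁻¹ • x) := by
      rw [stmt_mulVecE_rsmul_vec, smul_inv_smul₀ (ne_of_gt hr)]
    have hnorm1 : ‖w₂‖ = ‖x‖ * ‖mulVecE (P₂ (μ x)) (‖x‖⁻¹ • x)‖ := by
      rw [hxuexp, norm_smul, Real.norm_of_nonneg (le_of_lt hr)]
    have hsplit : mulVecE (P₂ (μ x)) yh - mulVecE (P₂ (μ x)) (‖x‖⁻¹ • x)
        = mulVecE (P₂ (μ x)) (yh - ‖x‖⁻¹ • x) := (stmt_mulVecE_sub_vec _ _ _).symm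
    have hlow2 : Kc⁻¹ * N - N * ε ≤ ‖mulVecE (P₂ (μ x)) (‖x‖⁻¹ • x)‖ := by
      have h1 : ‖mulVecE (P₂ (μ x)) yh‖ - ‖mulVecE (P₂ (μ x)) (‖x‖⁻¹ • x)‖
          ≤ ‖mulVecE (P₂ (μ x)) (yh - ‖x‖⁻¹ • x)‖ := by
        rw [← hsplit]
        exact norm_sub_norm_le _ _
      have h2 : ‖mulVecE (P₂ (μ x)) (yh - ‖x‖⁻¹ • x)‖ ≤ N * ε := by
        calc ‖mulVecE (P₂ (μ x)) (yh - ‖x‖⁻¹ • x)‖ ≤ N * ‖yh - ‖x‖⁻¹ • x‖ := stmt_opBound _ _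
          _ ≤ N * ε := by
              refine mul_le_mul_of_nonneg_left ?_ hN
              rw [← norm_neg]
              simpa using le_of_lt hxu
      have h3 : Kc⁻¹ * N ≤ ‖mulVecE (P₂ (μ x)) yh‖ := by
        rw [inv_mul_le_iff₀ hKc]
        linarith [hyNlow]
      linarith
    rw [hnorm1]
    exact mul_le_mul_of_nonneg_left hlow2 (le_of_lt hr)
  -- gradient values and norms
  have hgf₁ : gradient f₁ x = (2:ℝ) • (Complex.I • w₁) := (hgrad₁ x).gradient
  have hgf₂ : gradient f₂ x = (2:ℝ) • (Complex.I • w₂) := (hgrad₂ x).gradient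
  have hgf : gradient f x = gradient f₁ x + gradient f₂ x := by
    rw [hgf₁, hgf₂]
    exact (hgradf x).gradient
  have hnI : ∀ w : stmtE n, ‖(2:ℝ) • (Complex.I • w)‖ = 2 * ‖w‖ := by
    intro w
    rw [norm_smul, norm_smul, Complex.norm_I, one_mul, Real.norm_ofNat]
  have hga : ‖gradient f₁ x‖ = 2 * ‖w₁‖ := by rw [hgf₁]; exact hnI w₁
  have hgb : ‖gradient f₂ x‖ = 2 * ‖w₂‖ := by rw [hgf₂]; exact hnI w₂
  have hIinner : (inner ℝ (Complex.I • w₁) (Complex.I • w₂)) = inner ℝ w₁ w₂ := by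
    rw [stmt_inner_re, stmt_inner_re, inner_smul_left, inner_smul_right, Complex.conj_I,
      neg_mul, ← mul_assoc, Complex.I_mul_I, neg_mul, one_mul, neg_neg]
  have hinner : (inner ℝ (gradient f₁ x) (gradient f₂ x)) = 4 * (inner ℝ w₁ w₂) := by
    rw [hgf₁, hgf₂, real_inner_smul_left, real_inner_smul_right, hIinner]
    ring
  have hnormsq : ‖gradient f x‖^2 = ‖gradient f₁ x‖^2
      + 2 * (inner ℝ (gradient f₁ x) (gradient f₂ x)) + ‖gradient f₂ x‖^2 := by
    rw [hgf]
    exact norm_add_sq_real _ _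
  -- numeric endgame
  have hKcinv : Kc⁻¹ = 8 * ε := by rw [hεdef]; ring
  have ht : -(‖w₁‖ * ‖w₂‖ / 7) ≤ (inner ℝ w₁ w₂) := by
    have habs : |(inner ℝ w₁ w₂)| ≤ ‖w₁‖ * ‖w₂‖ / 7 := by
      refine le_trans hcbound ?_
      have h7 : 7 * (N * (‖x‖ * ε)) ≤ ‖w₂‖ := by
        have : ‖x‖ * (Kc⁻¹ * N - N * ε) = 7 * (N * (‖x‖ * ε)) := by
          rw [hKcinv]; ring
        linarith [hw₂low, this ▸ hw₂low]
      nlinarith [norm_nonneg w₁, norm_nonneg w₂, hN, hε.le, hr.le,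
        mul_nonneg (mul_nonneg hN hr.le) hε.le]
    have := abs_le.mp habs
    linarith [this.1]
  have hsq : (‖w₁‖ + ‖w₂‖)^2 ≤ ‖gradient f x‖^2 := by
    rw [hnormsq, hga, hgb, hinner]
    nlinarith [ht, sq_nonneg (‖w₁‖ - ‖w₂‖), norm_nonneg w₁, norm_nonneg w₂]
  have hfin : ‖w₁‖ + ‖w₂‖ ≤ ‖gradient f x‖ := by
    calc ‖w₁‖ + ‖w₂‖ = Real.sqrt ((‖w₁‖ + ‖w₂‖)^2) :=
          (Real.sqrt_sq (by positivity)).symm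
      _ ≤ Real.sqrt (‖gradient f x‖^2) := Real.sqrt_le_sqrt hsq
      _ = ‖gradient f x‖ := Real.sqrt_sq (norm_nonneg _)
  rw [ge_iff_le, hga, hgb]
  linarith
end
end
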